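/- Let λ > 0 and let f : ℝ → ℝ be monotone and CFL-compatible for λ. Let u : ℤ × ℕ → ℝ (written u_j^n) satisfy the upwind relation u_j^{n+1} = u_j^n − λ(f(u_j^n) − f(u_{j−1}^n)) for all columns j ≥ 1 and all n ≥ 0, where the boundary column (u_0^n)_{n≥0} is prescribed arbitrarily. Suppose V₀ ≥ 0 is such that ∑_{i=a}^{b} |u_i^0 − u_{i−1}^0| ≤ V₀ for all integers 1 ≤ a ≤ b, and suppose V_a ≥ 0 is such that ∑_{n=0}^{M'} |u_0^{n+1} − u_0^n| ≤ V_a for every M' ∈ ℕ. Then for every j ≥ 1 and every M ∈ ℕ, the temporal variation satisfies ∑_{n=0}^{M} |u_j^{n+1} − u_j^n| ≤ V₀ + V_a. -/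

import Mathlib

/-- temporal total variation bound for the upwind scheme on the
quarter plane with prescribed BV boundary data in the boundary column `j = 0`:
the temporal variation of every column `j ≥ 1` is bounded by the discrete
total variation `V₀` of the initial data plus the temporal variation bound
`V_a` of the boundary column. -/
theorem upwind_IBVP_temporal_variation_bound
    (lam : ℝ) (hlam : 0 < lam) (f : ℝ → ℝ)
    (hf : ∀ a b : ℝ, a ≤ b → 0 ≤ f b - f a ∧ f b - f a ≤ (b - a) / lam)
    (u : ℤ × ℕ → ℝ)
    (hscheme : ∀ j : ℤ, 1 ≤ j → ∀ n : ℕ,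
      u (j, n + 1) = u (j, n) - lam * (f (u (j, n)) - f (u (j - 1, n))))
    (V₀ : ℝ) (hV₀ : 0 ≤ V₀)
    (hTV₀ : ∀ a b : ℤ, 1 ≤ a → a ≤ b →
      ∑ i ∈ Finset.Icc a b, |u (i, 0) - u (i - 1, 0)| ≤ V₀)
    (Va : ℝ) (hVa : 0 ≤ Va)
    (hTVa : ∀ M' : ℕ,
      ∑ n ∈ Finset.range (M' + 1), |u (0, n + 1) - u (0, n)| ≤ Va) :
    ∀ j : ℤ, 1 ≤ j → ∀ M : ℕ,
      ∑ n ∈ Finset.range (M + 1), |u (j, n + 1) - u (j, n)| ≤ V₀ + Va := by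
  -- Key pointwise identity from monotonicity and CFL:
  have key : ∀ a b : ℝ, |(b - a) - lam * (f b - f a)| + lam * |f b - f a| = |b - a| := by
    intro a b
    rcases le_total a b with hab | hba
    · obtain ⟨h1, h2⟩ := hf a b hab
      have h2' : lam * (f b - f a) ≤ b - a := by
        have := (le_div_iff₀ hlam).mp h2; nlinarith
      have h3 : 0 ≤ lam * (f b - f a) := by positivity
      rw [abs_of_nonneg h1, abs_of_nonneg (by linarith : (0:ℝ) ≤ (b - a) - lam * (f b - f a)),
        abs_of_nonneg (by linarith : (0:ℝ) ≤ b - a)]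
      ring
    · obtain ⟨h1, h2⟩ := hf b a hba
      have h2' : lam * (f a - f b) ≤ a - b := by
        have := (le_div_iff₀ hlam).mp h2; nlinarith
      have h3 : 0 ≤ lam * (f a - f b) := by positivity
      rw [abs_of_nonpos (by linarith : f b - f a ≤ 0),
        abs_of_nonpos (by linarith : (b - a) - lam * (f b - f a) ≤ 0),
        abs_of_nonpos (by linarith : b - a ≤ 0)]
      ring
  have main : ∀ (a b C D : ℝ), D = (b - a) - lam * (f b - f a) - C →
      lam * |f b - f a| + |D| ≤ |b - a| + |C| := by
    intro a b C D hD
    have h1 := key a b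
    have h2 : |D| ≤ |(b - a) - lam * (f b - f a)| + |C| := by
      rw [hD]; exact abs_sub _ _
    linarith
  -- splitting Icc sums at the top
  have hsplit : ∀ (j : ℤ), 1 ≤ j + 1 → ∀ g : ℤ → ℝ,
      ∑ i ∈ Finset.Icc (1:ℤ) (j+1), g i = (∑ i ∈ Finset.Icc (1:ℤ) j, g i) + g (j+1) := by
    intro j hj g
    have hins : Finset.Icc (1:ℤ) (j+1) = insert (j+1) (Finset.Icc 1 j) := by
      ext x; simp only [Finset.mem_Icc, Finset.mem_insert]; omega
    rw [hins, Finset.sum_insert (by simp)]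
    ring
  -- per-time-step estimate, by induction on the column j
  have step : ∀ n : ℕ, ∀ j : ℤ, 1 ≤ j →
      |u (j, n+1) - u (j, n)| + ∑ i ∈ Finset.Icc (1:ℤ) j, |u (i, n+1) - u (i-1, n+1)| ≤
      (∑ i ∈ Finset.Icc (1:ℤ) j, |u (i, n) - u (i-1, n)|) + |u (0, n+1) - u (0, n)| := by
    intro n j hj
    refine Int.le_induction (motive := fun j _ =>
      |u (j, n+1) - u (j, n)| + ∑ i ∈ Finset.Icc (1:ℤ) j, |u (i, n+1) - u (i-1, n+1)| ≤
      (∑ i ∈ Finset.Icc (1:ℤ) j, |u (i, n) - u (i-1, n)|) + |u (0, n+1) - u (0, n)|)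
      ?_ ?_ j hj
    · simp only [Finset.Icc_self, Finset.sum_singleton]
      have hs := hscheme 1 le_rfl n
      norm_num at hs
      have hw : |u (1, n+1) - u (1, n)| = lam * |f (u (1, n)) - f (u (0, n))| := by
        rw [hs]
        rw [show u (1, n) - lam * (f (u (1, n)) - f (u (0, n))) - u (1, n)
          = -(lam * (f (u (1, n)) - f (u (0, n)))) by ring]
        rw [abs_neg, abs_mul, abs_of_pos hlam]
      rw [hw]
      have := main (u (0, n)) (u (1, n)) (u (0, n+1) - u (0, n)) (u (1, n+1) - u (0, n+1))
        (by rw [hs]; ring)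
      norm_num
      linarith [this]
    · intro j hj ih
      rw [hsplit j (by linarith), hsplit j (by linarith)]
      have hsj := hscheme j hj n
      have hsj1 := hscheme (j+1) (by linarith) n
      rw [show (j:ℤ) + 1 - 1 = j by ring] at hsj1
      have hw : |u (j+1, n+1) - u (j+1, n)| = lam * |f (u (j+1, n)) - f (u (j, n))| := by
        rw [hsj1]
        rw [show u (j+1, n) - lam * (f (u (j+1, n)) - f (u (j, n))) - u (j+1, n)
          = -(lam * (f (u (j+1, n)) - f (u (j, n)))) by ring]
        rw [abs_neg, abs_mul, abs_of_pos hlam]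
      rw [hw]
      have hmain := main (u (j, n)) (u (j+1, n)) (u (j, n+1) - u (j, n))
        (u (j+1, n+1) - u ((j+1)-1, n+1))
        (by rw [show (j:ℤ) + 1 - 1 = j by ring, hsj1, hsj]; ring)
      rw [show (j:ℤ) + 1 - 1 = j by ring] at hmain ⊢
      linarith [ih]
  intro j hj M
  -- telescope in n
  have tele : ∀ n : ℕ, |u (j, n+1) - u (j, n)| ≤
      ((∑ i ∈ Finset.Icc (1:ℤ) j, |u (i, n) - u (i-1, n)|)
        - ∑ i ∈ Finset.Icc (1:ℤ) j, |u (i, n+1) - u (i-1, n+1)|)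
      + |u (0, n+1) - u (0, n)| := by
    intro n; linarith [step n j hj]
  calc ∑ n ∈ Finset.range (M + 1), |u (j, n + 1) - u (j, n)|
      ≤ ∑ n ∈ Finset.range (M + 1),
          (((∑ i ∈ Finset.Icc (1:ℤ) j, |u (i, n) - u (i-1, n)|)
            - ∑ i ∈ Finset.Icc (1:ℤ) j, |u (i, n+1) - u (i-1, n+1)|)
          + |u (0, n+1) - u (0, n)|) := Finset.sum_le_sum fun n _ => tele n
    _ = ((∑ i ∈ Finset.Icc (1:ℤ) j, |u (i, 0) - u (i-1, 0)|)
          - ∑ i ∈ Finset.Icc (1:ℤ) j, |u (i, M+1) - u (i-1, M+1)|)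
        + ∑ n ∈ Finset.range (M + 1), |u (0, n+1) - u (0, n)| := by
          rw [Finset.sum_add_distrib,
            Finset.sum_range_sub' (fun n => ∑ i ∈ Finset.Icc (1:ℤ) j, |u (i, n) - u (i-1, n)|)]
    _ ≤ V₀ + Va := by
        have h1 := hTV₀ 1 j le_rfl hj
        have h2 := hTVa M
        have h3 : (0:ℝ) ≤ ∑ i ∈ Finset.Icc (1:ℤ) j, |u (i, M+1) - u (i-1, M+1)| :=
          Finset.sum_nonneg fun i _ => abs_nonneg _
        linarith
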